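/- For a sequence of bivariate copulas (C_n) that are all stochastically increasing (SI), pointwise convergence of C_n to a copula C implies ∂₁-convergence: ∫₀¹ |∂₁C_n(t,u) - ∂₁C(t,u)| dt → 0 for every u ∈ [0,1]; in particular, the limit C is SI as well. -/

import Mathlib

open Set MeasureTheory

/-- A bivariate copula on `[0,1]²`. -/
structure IsCopula (C : ℝ → ℝ → ℝ) : Prop where
  grounded₁ : ∀ u ∈ Icc (0:ℝ) 1, C u 0 = 0
  grounded₂ : ∀ v ∈ Icc (0:ℝ) 1, C 0 v = 0
  margin₁ : ∀ u ∈ Icc (0:ℝ) 1, C u 1 = u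
  margin₂ : ∀ v ∈ Icc (0:ℝ) 1, C 1 v = v
  twoIncreasing : ∀ u₁ u₂ v₁ v₂ : ℝ, u₁ ∈ Icc (0:ℝ) 1 → u₂ ∈ Icc (0:ℝ) 1 →
    v₁ ∈ Icc (0:ℝ) 1 → v₂ ∈ Icc (0:ℝ) 1 → u₁ ≤ u₂ → v₁ ≤ v₂ →
    C u₂ v₁ + C u₁ v₂ ≤ C u₂ v₂ + C u₁ v₁

/-- `d` is a version of the first partial derivative `∂₁ D` of the copula `D`:
it is measurable in `t`, takes values in `[0,1]` almost everywhere on `(0,1)`,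
and `D u v = ∫₀ᵘ d(t,v) dt`. -/
structure IsPartialDeriv₁ (D : ℝ → ℝ → ℝ) (d : ℝ → ℝ → ℝ) : Prop where
  meas : ∀ v ∈ Icc (0:ℝ) 1,
    AEStronglyMeasurable (fun t => d t v) (volume.restrict (Ioo (0:ℝ) 1))
  mem_Icc : ∀ v ∈ Icc (0:ℝ) 1,
    ∀ᵐ t ∂(volume.restrict (Ioo (0:ℝ) 1)), d t v ∈ Icc (0:ℝ) 1
  integral_rep : ∀ v ∈ Icc (0:ℝ) 1, ∀ u ∈ Icc (0:ℝ) 1,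
    D u v = ∫ t in (0:ℝ)..u, d t v

/-- A copula `C` with partial derivative `d = ∂₁C` is stochastically increasing (SI)
if for every `u`, `t ↦ d(t,u)` agrees almost everywhere on `(0,1)` with a
non-increasing function. -/
def IsSI (d : ℝ → ℝ → ℝ) : Prop :=
  ∀ u ∈ Icc (0:ℝ) 1, ∃ g : ℝ → ℝ, AntitoneOn g (Ioo (0:ℝ) 1) ∧
    ∀ᵐ t ∂(volume.restrict (Ioo (0:ℝ) 1)), d t u = g t

open Filter

noncomputable def μ01 : Measure ℝ := (volume : Measure ℝ).restrict (Ioo (0:ℝ) 1)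

lemma SIaux.finite01 : IsFiniteMeasure μ01 := by
  constructor
  rw [μ01, Measure.restrict_apply_univ, Real.volume_Ioo]
  simp

lemma SIaux.g_mem {f g : ℝ → ℝ} (hg : AntitoneOn g (Ioo (0:ℝ) 1))
    (hae : ∀ᵐ t ∂μ01, f t = g t) (hmem : ∀ᵐ t ∂μ01, f t ∈ Icc (0:ℝ) 1) :
    ∀ t ∈ Ioo (0:ℝ) 1, g t ∈ Icc (0:ℝ) 1 := by
  have hS := hae.and hmem
  rw [μ01, ae_restrict_iff' measurableSet_Ioo] at hS
  set S : Set ℝ := {t | t ∈ Ioo (0:ℝ) 1 → f t = g t ∧ f t ∈ Icc (0:ℝ) 1} with hSdef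
  have hSc : volume Sᶜ = 0 := hS
  intro t ht
  have key : ∀ a b : ℝ, 0 ≤ a → a < b → b ≤ 1 → ∃ s ∈ Ioo a b, f s = g s ∧ f s ∈ Icc (0:ℝ) 1 ∧ s ∈ Ioo (0:ℝ) 1 := by
    intro a b ha hab hb1
    have hsub : Ioo a b ⊆ Ioo (0:ℝ) 1 := Ioo_subset_Ioo ha hb1
    have hpos : volume (Ioo a b) ≠ 0 := by
      rw [Real.volume_Ioo, ne_eq, ENNReal.ofReal_eq_zero, not_le]
      linarith
    have : ¬ (Ioo a b ⊆ Sᶜ) := by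
      intro hcon
      exact hpos (measure_mono_null hcon hSc)
    rw [not_subset] at this
    obtain ⟨s, hs1, hs2⟩ := this
    rw [mem_compl_iff, not_not] at hs2
    obtain ⟨h1, h2⟩ := hs2 (hsub hs1)
    exact ⟨s, hs1, h1, h2, hsub hs1⟩
  constructor
  · obtain ⟨s, hs, he, hm, hsI⟩ := key t 1 (le_of_lt ht.1) ht.2 le_rfl
    calc (0:ℝ) ≤ f s := hm.1
    _ = g s := he
    _ ≤ g t := hg ht hsI (le_of_lt hs.1)
  · obtain ⟨s, hs, he, hm, hsI⟩ := key 0 t le_rfl ht.1 (le_of_lt ht.2)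
    calc g t ≤ g s := hg hsI ht (le_of_lt hs.2)
    _ = f s := he.symm
    _ ≤ 1 := hm.2

lemma SIaux.integrable_f {f : ℝ → ℝ} (hmeas : AEStronglyMeasurable f μ01)
    (hmem : ∀ᵐ t ∂μ01, f t ∈ Icc (0:ℝ) 1) : Integrable f μ01 := by
  have : IsFiniteMeasure μ01 := SIaux.finite01
  apply Integrable.mono' (integrable_const (1:ℝ)) hmeas
  filter_upwards [hmem] with x hx
  rw [Real.norm_eq_abs, abs_le]
  exact ⟨by linarith [hx.1], hx.2⟩

lemma SIaux.intervalIntegrable_f {f : ℝ → ℝ} (hmeas : AEStronglyMeasurable f μ01)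
    (hmem : ∀ᵐ t ∂μ01, f t ∈ Icc (0:ℝ) 1) {x : ℝ} (hx : x ∈ Icc (0:ℝ) 1) :
    IntervalIntegrable f volume 0 x := by
  have hInt : Integrable f μ01 := SIaux.integrable_f hmeas hmem
  unfold μ01 at hInt
  rw [intervalIntegrable_iff_integrableOn_Ioc_of_le hx.1, IntegrableOn,
    Measure.restrict_congr_set Ioo_ae_eq_Ioc.symm]
  exact (hInt.mono_measure (Measure.restrict_mono (Ioo_subset_Ioo le_rfl hx.2) le_rfl))

lemma SIaux.slope_bounds {f g : ℝ → ℝ} {F : ℝ → ℝ}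
    (hmeas : AEStronglyMeasurable f μ01)
    (hmem : ∀ᵐ t ∂μ01, f t ∈ Icc (0:ℝ) 1)
    (hg : AntitoneOn g (Ioo (0:ℝ) 1))
    (hae : ∀ᵐ t ∂μ01, f t = g t)
    (hrep : ∀ x ∈ Icc (0:ℝ) 1, F x = ∫ r in (0:ℝ)..x, f r)
    {t s : ℝ} (ht : t ∈ Ioo (0:ℝ) 1) (hs : s ∈ Ioo (0:ℝ) 1) (hts : t < s) :
    g s * (s - t) ≤ F s - F t ∧ F s - F t ≤ g t * (s - t) := by
  have hInt : Integrable f μ01 := SIaux.integrable_f hmeas hmem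
  have hIoo : IntegrableOn f (Ioo (0:ℝ) 1) volume := by unfold μ01 at hInt; exact hInt
  have hsub2 : Ioo t s ⊆ Ioo (0:ℝ) 1 := Ioo_subset_Ioo (le_of_lt ht.1) (le_of_lt hs.2)
  have hdiff : F s - F t = ∫ x in Ioo t s, f x := by
    rw [hrep s ⟨le_of_lt hs.1, le_of_lt hs.2⟩, hrep t ⟨le_of_lt ht.1, le_of_lt ht.2⟩,
      intervalIntegral.integral_interval_sub_left
        (SIaux.intervalIntegrable_f hmeas hmem ⟨le_of_lt hs.1, le_of_lt hs.2⟩)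
        (SIaux.intervalIntegrable_f hmeas hmem ⟨le_of_lt ht.1, le_of_lt ht.2⟩),
      intervalIntegral.integral_of_le (le_of_lt hts), integral_Ioc_eq_integral_Ioo]
  have hae2 : ∀ᵐ x ∂volume.restrict (Ioo t s), f x = g x ∧ f x ∈ Icc (0:ℝ) 1 := by
    apply ae_restrict_of_ae_restrict_of_subset hsub2
    unfold μ01 at hae hmem
    exact hae.and hmem
  have hmm : ∀ᵐ x ∂volume.restrict (Ioo t s), x ∈ Ioo t s :=
    ae_restrict_mem measurableSet_Ioo
  have hIts : IntegrableOn f (Ioo t s) volume := hIoo.mono_set hsub2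
  have hvol : (volume (Ioo t s)).toReal = s - t := by
    rw [Real.volume_Ioo, ENNReal.toReal_ofReal (by linarith)]
  constructor
  · have hle : ∫ x in Ioo t s, (g s : ℝ) ≤ ∫ x in Ioo t s, f x := by
      apply integral_mono_ae (integrable_const _) hIts
      filter_upwards [hae2, hmm] with x hx hxm
      rw [hx.1]
      exact hg (hsub2 hxm) hs (le_of_lt hxm.2)
    rw [setIntegral_const, measureReal_def, hvol, smul_eq_mul, mul_comm] at hle
    rw [hdiff]
    exact hle
  · have hle : ∫ x in Ioo t s, f x ≤ ∫ x in Ioo t s, (g t : ℝ) := by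
      apply integral_mono_ae hIts (integrable_const _)
      filter_upwards [hae2, hmm] with x hx hxm
      rw [hx.1]
      exact hg ht (hsub2 hxm) (le_of_lt hxm.1)
    rw [setIntegral_const, measureReal_def, hvol, smul_eq_mul, mul_comm] at hle
    rw [hdiff]
    exact hle

lemma SIaux.integral_Iic {f : ℝ → ℝ} {F : ℝ → ℝ}
    (hmeas : AEStronglyMeasurable f μ01)
    (hmem : ∀ᵐ t ∂μ01, f t ∈ Icc (0:ℝ) 1)
    (hrep : ∀ x ∈ Icc (0:ℝ) 1, F x = ∫ r in (0:ℝ)..x, f r) (a : ℝ) :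
    ∫ t in Iic a, f t ∂μ01 = F (min 1 (max a 0)) := by
  set b := min 1 (max a 0) with hbdef
  have hb : b ∈ Icc (0:ℝ) 1 := ⟨le_min zero_le_one (le_max_right a 0), min_le_left _ _⟩
  have h1 : Iic a ∩ Ioo (0:ℝ) 1 = Iic b ∩ Ioo (0:ℝ) 1 := by
    ext t
    simp only [mem_inter_iff, mem_Iic, mem_Ioo]
    constructor
    · rintro ⟨hta, ht0, ht1⟩
      exact ⟨le_min (le_of_lt ht1) (le_trans hta (le_max_left a 0)), ht0, ht1⟩
    · rintro ⟨htb, ht0, ht1⟩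
      have h2 : t ≤ max a 0 := le_trans htb (min_le_right _ _)
      refine ⟨?_, ht0, ht1⟩
      rcases le_total a 0 with h | h
      · rw [max_eq_right h] at h2; linarith
      · rwa [max_eq_left h] at h2
  have hres : ∫ t in Iic a, f t ∂μ01 = ∫ t in Iic a ∩ Ioo (0:ℝ) 1, f t := by
    unfold μ01
    rw [Measure.restrict_restrict measurableSet_Iic]
  have hset : (Iic b ∩ Ioo (0:ℝ) 1 : Set ℝ) =ᵐ[volume] Ioo (0:ℝ) b := by
    rw [ae_eq_set]
    constructor
    · refine measure_mono_null ?_ (measure_singleton b)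
      rintro t ⟨⟨htb, ht0, ht1⟩, hnot⟩
      simp only [mem_Ioo, not_and, not_lt] at hnot
      exact mem_singleton_iff.mpr (le_antisymm htb (hnot ht0))
    · have h0 : Ioo (0:ℝ) b \ (Iic b ∩ Ioo (0:ℝ) 1) = ∅ := by
        rw [eq_empty_iff_forall_notMem]
        rintro t ⟨ht1, hn⟩
        rw [mem_Ioo] at ht1
        exact hn ⟨mem_Iic.mpr (le_of_lt ht1.2), mem_Ioo.mpr ⟨ht1.1, lt_of_lt_of_le ht1.2 hb.2⟩⟩
      rw [h0, measure_empty]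
  rw [hres, h1, setIntegral_congr_set hset, ← integral_Ioc_eq_integral_Ioo,
    ← intervalIntegral.integral_of_le hb.1, ← hrep b hb]

lemma SIaux.ae_eq_of_integral_Iic_eq {f h : ℝ → ℝ}
    (hfm : AEStronglyMeasurable f μ01) (hfmem : ∀ᵐ t ∂μ01, f t ∈ Icc (0:ℝ) 1)
    (hhm : AEStronglyMeasurable h μ01) (hhmem : ∀ᵐ t ∂μ01, h t ∈ Icc (0:ℝ) 1)
    (heq : ∀ a : ℝ, ∫ t in Iic a, f t ∂μ01 = ∫ t in Iic a, h t ∂μ01) :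
    ∀ᵐ t ∂μ01, f t = h t := by
  haveI : IsFiniteMeasure μ01 := SIaux.finite01
  haveI : SigmaFinite μ01 := by unfold μ01; infer_instance
  have hfInt : Integrable f μ01 := SIaux.integrable_f hfm hfmem
  have hhInt : Integrable h μ01 := SIaux.integrable_f hhm hhmem
  have hFm : AEMeasurable (fun t => ENNReal.ofReal (f t)) μ01 :=
    ENNReal.measurable_ofReal.comp_aemeasurable hfm.aemeasurable
  have hHm : AEMeasurable (fun t => ENNReal.ofReal (h t)) μ01 :=
    ENNReal.measurable_ofReal.comp_aemeasurable hhm.aemeasurable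
  haveI : IsFiniteMeasure (μ01.withDensity (fun t => ENNReal.ofReal (f t))) :=
    isFiniteMeasure_withDensity_ofReal hfInt.hasFiniteIntegral
  have hcompute : ∀ (φ : ℝ → ℝ), Integrable φ μ01 → (∀ᵐ t ∂μ01, φ t ∈ Icc (0:ℝ) 1) →
      ∀ a : ℝ, (μ01.withDensity (fun t => ENNReal.ofReal (φ t))) (Iic a)
        = ENNReal.ofReal (∫ t in Iic a, φ t ∂μ01) := by
    intro φ hφInt hφmem a
    rw [withDensity_apply _ measurableSet_Iic,
      ← ofReal_integral_eq_lintegral_ofReal (hφInt.restrict)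
        (ae_restrict_of_ae (hφmem.mono (fun t htm => htm.1)))]
  have hmeq : μ01.withDensity (fun t => ENNReal.ofReal (f t))
      = μ01.withDensity (fun t => ENNReal.ofReal (h t)) := by
    apply Measure.ext_of_Iic
    intro a
    rw [hcompute f hfInt hfmem a, hcompute h hhInt hhmem a, heq a]
  have := (withDensity_eq_iff_of_sigmaFinite hFm hHm).mp hmeq
  filter_upwards [this, hfmem, hhmem] with t ht hf hh
  have := congrArg ENNReal.toReal ht
  rwa [ENNReal.toReal_ofReal hf.1, ENNReal.toReal_ofReal hh.1] at this

lemma SIaux.main (Cn : ℕ → ℝ → ℝ → ℝ) (dn : ℕ → ℝ → ℝ → ℝ) (C d : ℝ → ℝ → ℝ)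
    (hdn : ∀ n, IsPartialDeriv₁ (Cn n) (dn n)) (hSI : ∀ n, IsSI (dn n))
    (hd : IsPartialDeriv₁ C d)
    (hconv : ∀ u ∈ Icc (0:ℝ) 1, ∀ v ∈ Icc (0:ℝ) 1,
      Tendsto (fun n => Cn n u v) atTop (nhds (C u v)))
    (u : ℝ) (hu : u ∈ Icc (0:ℝ) 1) :
    Tendsto (fun n => ∫ t in (0:ℝ)..1, |dn n t u - d t u|) atTop (nhds 0) ∧
    ∃ g : ℝ → ℝ, AntitoneOn g (Ioo (0:ℝ) 1) ∧
      ∀ᵐ t ∂(volume.restrict (Ioo (0:ℝ) 1)), d t u = g t := by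
  haveI hfin : IsFiniteMeasure μ01 := SIaux.finite01
  choose g hganti hgae using fun n => hSI n u hu
  have hgae' : ∀ n, ∀ᵐ t ∂μ01, dn n t u = g n t := hgae
  have hmeasn : ∀ n, AEStronglyMeasurable (fun t => dn n t u) μ01 :=
    fun n => (hdn n).meas u hu
  have hmemn : ∀ n, ∀ᵐ t ∂μ01, dn n t u ∈ Icc (0:ℝ) 1 := fun n => (hdn n).mem_Icc u hu
  have hrepn : ∀ n, ∀ x ∈ Icc (0:ℝ) 1, Cn n x u = ∫ r in (0:ℝ)..x, dn n r u :=
    fun n x hx => (hdn n).integral_rep u hu x hx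
  have hmeas : AEStronglyMeasurable (fun t => d t u) μ01 := hd.meas u hu
  have hmem : ∀ᵐ t ∂μ01, d t u ∈ Icc (0:ℝ) 1 := hd.mem_Icc u hu
  have hrep : ∀ x ∈ Icc (0:ℝ) 1, C x u = ∫ r in (0:ℝ)..x, d r u :=
    fun x hx => hd.integral_rep u hu x hx
  have gmem : ∀ n, ∀ t ∈ Ioo (0:ℝ) 1, g n t ∈ Icc (0:ℝ) 1 :=
    fun n => SIaux.g_mem (hganti n) (hgae' n) (hmemn n)
  -- boundedness facts
  have bddA : ∀ t ∈ Ioo (0:ℝ) 1, IsBoundedUnder (· ≤ ·) atTop (fun n => g n t) :=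
    fun t ht => isBoundedUnder_of ⟨1, fun n => (gmem n t ht).2⟩
  have bddB : ∀ t ∈ Ioo (0:ℝ) 1, IsBoundedUnder (· ≥ ·) atTop (fun n => g n t) :=
    fun t ht => isBoundedUnder_of ⟨0, fun n => (gmem n t ht).1⟩
  set l : ℝ → ℝ := fun t => liminf (fun n => g n t) atTop with hldef
  have hlmem : ∀ t ∈ Ioo (0:ℝ) 1, l t ∈ Icc (0:ℝ) 1 := by
    intro t ht
    constructor
    · exact le_liminf_of_le ((bddA t ht).isCoboundedUnder_ge)
        (Eventually.of_forall fun n => (gmem n t ht).1)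
    · apply liminf_le_of_le (bddB t ht)
      intro b hb
      obtain ⟨n, hn⟩ := hb.exists
      exact le_trans hn (gmem n t ht).2
  have hlanti : AntitoneOn l (Ioo (0:ℝ) 1) := by
    intro x hx y hy hxy
    exact liminf_le_liminf (Eventually.of_forall fun n => hganti n hx hy hxy)
      (bddB y hy) ((bddA x hx).isCoboundedUnder_ge)
  set L : ℝ → ℝ := fun t => if t ≤ 0 then 1 else if t < 1 then l t else 0 with hLdef
  have hLeq : ∀ t ∈ Ioo (0:ℝ) 1, L t = l t := by
    intro t ht
    simp only [hLdef, if_neg (not_le.mpr ht.1), if_pos ht.2]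
  have hLanti : Antitone L := by
    intro x y hxy
    by_cases hy0 : y ≤ 0
    · have hx0 : x ≤ 0 := le_trans hxy hy0
      simp only [hLdef, if_pos hy0, if_pos hx0, le_refl]
    · by_cases hx0 : x ≤ 0
      · simp only [hLdef, if_pos hx0, if_neg hy0]
        split_ifs with hy1
        · exact (hlmem y ⟨lt_of_not_ge hy0, hy1⟩).2
        · exact zero_le_one
      · simp only [hLdef, if_neg hx0, if_neg hy0]
        by_cases hx1 : x < 1
        · rw [if_pos hx1]
          by_cases hy1 : y < 1
          · rw [if_pos hy1]
            exact hlanti ⟨lt_of_not_ge hx0, hx1⟩ ⟨lt_of_not_ge hy0, hy1⟩ hxy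
          · rw [if_neg hy1]
            exact (hlmem x ⟨lt_of_not_ge hx0, hx1⟩).1
        · rw [if_neg hx1, if_neg (show ¬ y < 1 by push_neg at hx1 ⊢; linarith)]
  -- key slope inequality
  have hK1 : ∀ t ∈ Ioo (0:ℝ) 1, ∀ s ∈ Ioo (0:ℝ) 1, t < s →
      limsup (fun n => g n s) atTop ≤ l t := by
    intro t ht s hs hts
    have hst : (0:ℝ) < s - t := by linarith [hts]
    set m : ℕ → ℝ := fun n => (Cn n s u - Cn n t u) / (s - t) with hmdef
    have hub : ∀ n, g n s ≤ m n := fun n => (le_div_iff₀ hst).mpr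
      ((SIaux.slope_bounds (hmeasn n) (hmemn n) (hganti n) (hgae' n) (hrepn n) ht hs hts).1)
    have hlb : ∀ n, m n ≤ g n t := fun n => (div_le_iff₀ hst).mpr
      ((SIaux.slope_bounds (hmeasn n) (hmemn n) (hganti n) (hgae' n) (hrepn n) ht hs hts).2)
    have htI : t ∈ Icc (0:ℝ) 1 := ⟨le_of_lt ht.1, le_of_lt ht.2⟩
    have hsI : s ∈ Icc (0:ℝ) 1 := ⟨le_of_lt hs.1, le_of_lt hs.2⟩
    have hm : Tendsto m atTop (nhds ((C s u - C t u) / (s - t))) :=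
      ((hconv s hsI u hu).sub (hconv t htI u hu)).div_const _
    have h1 : limsup (fun n => g n s) atTop ≤ limsup m atTop :=
      limsup_le_limsup (Eventually.of_forall hub)
        ((bddB s hs).isCoboundedUnder_le)
        (isBoundedUnder_of ⟨1, fun n => le_trans (hlb n) (gmem n t ht).2⟩)
    have h2 : liminf m atTop ≤ liminf (fun n => g n t) atTop :=
      liminf_le_liminf (Eventually.of_forall hlb)
        (isBoundedUnder_of ⟨0, fun n => le_trans (gmem n s hs).1 (hub n)⟩)
        ((bddA t ht).isCoboundedUnder_ge)
    rw [hm.limsup_eq] at h1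
    rw [hm.liminf_eq] at h2
    exact h1.trans h2
  -- convergence at continuity points of L
  have htend_g : ∀ t ∈ Ioo (0:ℝ) 1, ContinuousAt L t →
      Tendsto (fun n => g n t) atTop (nhds (l t)) := by
    intro t ht hcont
    have hrseq : Tendsto (fun k : ℕ => t - t / ((k : ℝ) + 2)) atTop (nhds t) := by
      have h1 : Tendsto (fun k : ℕ => ((k : ℝ) + 2)) atTop atTop :=
        tendsto_atTop_add_const_right _ 2 tendsto_natCast_atTop_atTop
      have h2 : Tendsto (fun k : ℕ => t / ((k : ℝ) + 2)) atTop (nhds 0) := by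
        simpa [div_eq_mul_inv] using (h1.inv_tendsto_atTop).const_mul t
      simpa using (tendsto_const_nhds (x := t)).sub h2
    have hrmem : ∀ k : ℕ, (t - t / ((k : ℝ) + 2)) ∈ Ioo (0:ℝ) 1 ∧ t - t / ((k : ℝ) + 2) < t := by
      intro k
      have hk0 : (0:ℝ) ≤ (k : ℝ) := Nat.cast_nonneg k
      have hk2 : (0:ℝ) < (k : ℝ) + 2 := by linarith
      have hd1 : 0 < t / ((k : ℝ) + 2) := div_pos ht.1 hk2
      have hd2 : t / ((k : ℝ) + 2) ≤ t / 2 :=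
        div_le_div_of_nonneg_left (le_of_lt ht.1) two_pos (by linarith)
      refine ⟨⟨by linarith [ht.1], by linarith [ht.2]⟩, by linarith⟩
    have hLr : Tendsto (fun k : ℕ => L (t - t / ((k : ℝ) + 2))) atTop (nhds (L t)) :=
      hcont.tendsto.comp hrseq
    rw [hLeq t ht] at hLr
    have hlimsup : limsup (fun n => g n t) atTop ≤ l t := by
      apply ge_of_tendsto' hLr
      intro k
      rw [hLeq _ (hrmem k).1]
      exact hK1 _ (hrmem k).1 t ht (hrmem k).2
    exact tendsto_of_le_liminf_of_limsup_le le_rfl hlimsup (bddA t ht) (bddB t ht)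
  -- a.e. convergence
  have hcount : Set.Countable {x : ℝ | ¬ ContinuousAt L x} := hLanti.countable_not_continuousAt
  have hcontae : ∀ᵐ t ∂μ01, ContinuousAt L t := by
    have h0 : ∀ᵐ t ∂(volume : Measure ℝ), ContinuousAt L t := by
      rw [ae_iff]
      exact hcount.measure_zero _
    unfold μ01
    exact ae_restrict_of_ae h0
  have hIooae : ∀ᵐ t ∂μ01, t ∈ Ioo (0:ℝ) 1 := by
    unfold μ01
    exact ae_restrict_mem measurableSet_Ioo
  have htendae : ∀ᵐ t ∂μ01, Tendsto (fun n => dn n t u) atTop (nhds (L t)) := by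
    filter_upwards [hcontae, hIooae, ae_all_iff.mpr hgae'] with t hcont htI hgt
    rw [hLeq t htI]
    exact (htend_g t htI hcont).congr (fun n => (hgt n).symm)
  have hLmeas : AEStronglyMeasurable L μ01 := hLanti.measurable.aestronglyMeasurable
  have hLmem : ∀ᵐ t ∂μ01, L t ∈ Icc (0:ℝ) 1 := by
    filter_upwards [hIooae] with t ht
    rw [hLeq t ht]
    exact hlmem t ht
  -- the Iic integrals of d and L agree
  have hIiceq : ∀ a : ℝ, ∫ t in Iic a, d t u ∂μ01 = ∫ t in Iic a, L t ∂μ01 := by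
    intro a
    set b := min 1 (max a 0) with hbdef
    have hb : b ∈ Icc (0:ℝ) 1 := ⟨le_min zero_le_one (le_max_right a 0), min_le_left _ _⟩
    have hdint : ∫ t in Iic a, d t u ∂μ01 = C b u := by
      rw [SIaux.integral_Iic hmeas hmem hrep a, hbdef]
    have hnint : ∀ n, ∫ t in Iic a, dn n t u ∂μ01 = Cn n b u := by
      intro n
      rw [SIaux.integral_Iic (hmeasn n) (hmemn n) (hrepn n) a, hbdef]
    have hc1 : Tendsto (fun n => ∫ t in Iic a, dn n t u ∂μ01) atTop (nhds (C b u)) := by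
      simp only [hnint]
      exact hconv b hb u hu
    have hc2 : Tendsto (fun n => ∫ t in Iic a, dn n t u ∂μ01) atTop
        (nhds (∫ t in Iic a, L t ∂μ01)) := by
      apply tendsto_integral_of_dominated_convergence (fun _ => (1:ℝ))
        (fun n => (hmeasn n).restrict) (integrable_const _)
      · intro n
        apply ae_restrict_of_ae
        filter_upwards [hmemn n] with t ht
        rw [Real.norm_eq_abs, abs_le]
        exact ⟨by linarith [ht.1], ht.2⟩
      · exact ae_restrict_of_ae htendae
    rw [hdint, tendsto_nhds_unique hc2 hc1]
  have hdL : ∀ᵐ t ∂μ01, d t u = L t :=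
    SIaux.ae_eq_of_integral_Iic_eq hmeas hmem hLmeas hLmem hIiceq
  constructor
  · -- L¹ convergence
    have hform : ∀ n, ∫ t in (0:ℝ)..1, |dn n t u - d t u| = ∫ t, |dn n t u - d t u| ∂μ01 := by
      intro n
      rw [intervalIntegral.integral_of_le zero_le_one, integral_Ioc_eq_integral_Ioo]
      rfl
    have hdc : Tendsto (fun n => ∫ t, |dn n t u - d t u| ∂μ01) atTop
        (nhds (∫ _t, (0:ℝ) ∂μ01)) := by
      apply tendsto_integral_of_dominated_convergence (fun _ => (2:ℝ))
        (fun n => ((hmeasn n).sub hmeas).norm.congr ?_) (integrable_const _)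
      · intro n
        filter_upwards [hmemn n, hmem] with t h1 h2
        rw [Real.norm_eq_abs, abs_abs, abs_le]
        constructor <;> linarith [h1.1, h1.2, h2.1, h2.2]
      · filter_upwards [htendae, hdL] with t h1 h2
        have h3 : Tendsto (fun n => dn n t u - d t u) atTop (nhds 0) := by
          have := h1.sub (tendsto_const_nhds (x := d t u))
          rwa [← h2, sub_self] at this
        simpa using h3.abs
      · exact Eventually.of_forall (fun t => (Real.norm_eq_abs _).symm)
    rw [integral_zero] at hdc
    simpa only [hform] using hdc
  · exact ⟨L, hLanti.antitoneOn _, hdL⟩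

open Filter in
/-- For stochastically increasing copulas, pointwise convergence implies
∂₁-convergence, and the limit copula is SI as well. -/
theorem si_pointwise_implies_partial_deriv_convergence
    (Cn : ℕ → ℝ → ℝ → ℝ) (dn : ℕ → ℝ → ℝ → ℝ) (C d : ℝ → ℝ → ℝ)
    (hCn : ∀ n, IsCopula (Cn n)) (hdn : ∀ n, IsPartialDeriv₁ (Cn n) (dn n))
    (hSI : ∀ n, IsSI (dn n))
    (hC : IsCopula C) (hd : IsPartialDeriv₁ C d)
    (hconv : ∀ u ∈ Icc (0:ℝ) 1, ∀ v ∈ Icc (0:ℝ) 1,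
      Tendsto (fun n => Cn n u v) atTop (nhds (C u v))) :
    (∀ u ∈ Icc (0:ℝ) 1,
      Tendsto (fun n => ∫ t in (0:ℝ)..1, |dn n t u - d t u|) atTop (nhds 0)) ∧
    IsSI d := by
  refine ⟨fun u hu => (SIaux.main Cn dn C d hdn hSI hd hconv u hu).1,
    fun u hu => (SIaux.main Cn dn C d hdn hSI hd hconv u hu).2⟩
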